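/- Let G be a cactus and H an isometric subgraph of G consisting of a cycle C with three pendant isometric paths attached at three distinct vertices of C (the paths pairwise vertex-disjoint, each meeting C in exactly its attachment vertex). If M ⊆ V(H) is a multipacking of H, then M is also a multipacking of G. -/

import Mathlib

open SimpleGraph

variable {V : Type*}

/-- `p` restricted to `{0,…,k}` is an isometric path of length `k` in `G`. -/
def IsIsomPath (G : SimpleGraph V) (p : ℕ → V) (k : ℕ) : Prop :=
  ∀ i j, i ≤ k → j ≤ k → G.dist (p i) (p j) = max i j - min i j

def pathVerts (p : ℕ → V) (k : ℕ) : Set V := {x | ∃ i, i ≤ k ∧ p i = x}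

noncomputable def ecc (G : SimpleGraph V) [Fintype V] (v : V) : ℕ :=
  Finset.univ.sup (fun u => G.dist v u)

noncomputable def grad (G : SimpleGraph V) [Fintype V] : ℕ :=
  sInf (Set.range (ecc G))

noncomputable def gdiam (G : SimpleGraph V) [Fintype V] : ℕ :=
  Finset.univ.sup (fun v => ecc G v)

def IsMultipacking (G : SimpleGraph V) [Fintype V] (M : Set V) : Prop :=
  ∀ v : V, ∀ r : ℕ, 1 ≤ r → r ≤ gdiam G →
    (M ∩ {u | G.dist v u ≤ r}).ncard ≤ r

noncomputable def mp (G : SimpleGraph V) [Fintype V] : ℕ :=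
  sSup {n | ∃ M : Set V, IsMultipacking G M ∧ M.ncard = n}

def IsDomBroadcast (G : SimpleGraph V) [Fintype V] (f : V → ℕ) : Prop :=
  (∀ v, f v ≤ gdiam G) ∧ ∀ u : V, ∃ v : V, 1 ≤ f v ∧ G.dist u v ≤ f v

noncomputable def gammaB (G : SimpleGraph V) [Fintype V] : ℕ :=
  sInf {n | ∃ f : V → ℕ, IsDomBroadcast G f ∧ ∑ v, f v = n}

noncomputable def gammaDom (G : SimpleGraph V) [Fintype V] : ℕ :=
  sInf {n | ∃ D : Finset V, (∀ u : V, ∃ v ∈ D, u = v ∨ G.Adj u v) ∧ D.card = n}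

def IsFracMP (G : SimpleGraph V) [Fintype V] (w : V → ℝ) : Prop :=
  (∀ v, 0 ≤ w v) ∧ ∀ v : V, ∀ r : ℕ, 1 ≤ r →
    (∑ u ∈ Finset.univ.filter (fun u => G.dist v u ≤ r), w u) ≤ r

noncomputable def mpf (G : SimpleGraph V) [Fintype V] : ℝ :=
  sSup {s | ∃ w : V → ℝ, IsFracMP G w ∧ ∑ v, w v = s}

/-- A cactus: connected and every edge lies on at most one cycle. -/
def IsCactus (G : SimpleGraph V) : Prop :=
  G.Connected ∧ ∀ (u v : V) (c₁ : G.Walk u u) (c₂ : G.Walk v v),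
    c₁.IsCycle → c₂.IsCycle → ∀ e, e ∈ c₁.edges → e ∈ c₂.edges →
      (∀ e', e' ∈ c₁.edges ↔ e' ∈ c₂.edges)

def pentRel (k : ℕ) (x y : Fin (3*k) × Fin 5) : Prop :=
  (x.1 = y.1 ∧ (x.2.val + 1) % 5 = y.2.val) ∨
  (x.1.val + 1 = y.1.val ∧ x.2.val = 1 ∧ y.2.val = 4)

def Gk (k : ℕ) : SimpleGraph (Fin (3*k) × Fin 5) := SimpleGraph.fromRel (pentRel k)


def cycVerts (cyc : ℕ → V) (γ : ℕ) : Set V := {x | ∃ i, i < γ ∧ cyc i = x}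

/-- An isometric subgraph of a cactus consisting of a cycle with three pendant
isometric paths attached at three distinct cycle vertices. -/
structure SpecialSubgraph (G : SimpleGraph V) where
  γ : ℕ
  hγ : 3 ≤ γ
  cyc : ℕ → V
  cycInj : ∀ i j, i < γ → j < γ → cyc i = cyc j → i = j
  cycAdj : ∀ i, i < γ → G.Adj (cyc i) (cyc ((i+1) % γ))
  t₀ : ℕ
  t₁ : ℕ
  t₂ : ℕ
  ht₀ : t₀ < γ
  ht₁ : t₁ < γ
  ht₂ : t₂ < γ
  hne : t₀ ≠ t₁ ∧ t₁ ≠ t₂ ∧ t₀ ≠ t₂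
  la : ℕ
  lb : ℕ
  ld : ℕ
  pw : ℕ → V
  qw : ℕ → V
  rw : ℕ → V
  hp : IsIsomPath G pw la
  hq : IsIsomPath G qw lb
  hr : IsIsomPath G rw ld
  hp0 : pw 0 = cyc t₀
  hq0 : qw 0 = cyc t₁
  hr0 : rw 0 = cyc t₂
  disjPQ : pathVerts pw la ∩ pathVerts qw lb = ∅
  disjQR : pathVerts qw lb ∩ pathVerts rw ld = ∅
  disjPR : pathVerts pw la ∩ pathVerts rw ld = ∅
  meetP : pathVerts pw la ∩ cycVerts cyc γ = {cyc t₀}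
  meetQ : pathVerts qw lb ∩ cycVerts cyc γ = {cyc t₁}
  meetR : pathVerts rw ld ∩ cycVerts cyc γ = {cyc t₂}

def SpecialSubgraph.verts {G : SimpleGraph V} (H : SpecialSubgraph G) : Set V :=
  cycVerts H.cyc H.γ ∪ pathVerts H.pw H.la ∪ pathVerts H.qw H.lb ∪ pathVerts H.rw H.ld

namespace CactusHelper


variable {V : Type*} {G : SimpleGraph V}

lemma isPath_append {u v w : V} {p : G.Walk u v} {q : G.Walk v w}
    (hp : p.IsPath) (hq : q.IsPath)
    (h : ∀ x, x ∈ p.support → x ∈ q.support → x = v) : (p.append q).IsPath := by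
  rw [Walk.isPath_def, Walk.support_append]
  refine List.Nodup.append hp.support_nodup
    (hq.support_nodup.sublist (List.tail_sublist _)) ?_
  intro x hx hx'
  have hxq : x ∈ q.support := List.mem_of_mem_tail hx'
  have hxv := h x hx hxq
  subst hxv
  have hnd := hq.support_nodup
  rw [Walk.support_eq_cons] at hnd
  exact (List.nodup_cons.mp hnd).1 hx'

/-- A walk along a chain of adjacent vertices. -/
def chainW (G : SimpleGraph V) (f : ℕ → V) (i : ℕ) :
    (n : ℕ) → (∀ t, t < n → G.Adj (f (i + t)) (f (i + t + 1))) → G.Walk (f i) (f (i + n))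
  | 0, _ => Walk.nil
  | n+1, h => (chainW G f i n (fun t ht => h t (by omega))).concat (h n (by omega))

lemma chainW_support (f : ℕ → V) (i : ℕ) :
    ∀ (n : ℕ) (h : ∀ t, t < n → G.Adj (f (i + t)) (f (i + t + 1))),
      (chainW G f i n h).support = (List.range (n+1)).map (fun t => f (i+t))
  | 0, h => by simp [chainW, List.range_succ]
  | n+1, h => by
    rw [chainW, Walk.support_concat, chainW_support f i n]
    simp [List.range_succ, Nat.add_assoc]

lemma chainW_edges (f : ℕ → V) (i : ℕ) :
    ∀ (n : ℕ) (h : ∀ t, t < n → G.Adj (f (i + t)) (f (i + t + 1))),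
      (chainW G f i n h).edges = (List.range n).map (fun t => s(f (i+t), f (i+t+1)))
  | 0, h => by simp [chainW]
  | n+1, h => by
    rw [chainW, Walk.edges_concat, chainW_edges f i n]
    simp [List.range_succ, Nat.add_assoc]

lemma chainW_isPath (f : ℕ → V) (i n : ℕ)
    (h : ∀ t, t < n → G.Adj (f (i + t)) (f (i + t + 1)))
    (hinj : ∀ t₁ t₂, t₁ ≤ n → t₂ ≤ n → f (i + t₁) = f (i + t₂) → t₁ = t₂) :
    (chainW G f i n h).IsPath := by
  rw [Walk.isPath_def, chainW_support]
  refine List.Nodup.map_on ?_ List.nodup_range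
  intro t₁ h₁ t₂ h₂ heq
  rw [List.mem_range] at h₁ h₂
  exact hinj t₁ t₂ (by omega) (by omega) heq


section SpecialH

variable (H : SpecialSubgraph G)

lemma γpos : 0 < H.γ := by have := H.hγ; omega

/-- cyclic parametrization of the cycle -/
def cycF : ℕ → V := fun t => H.cyc (t % H.γ)

lemma cycF_mem (t : ℕ) : cycF H t ∈ cycVerts H.cyc H.γ :=
  ⟨t % H.γ, Nat.mod_lt _ (γpos H), rfl⟩

lemma cycF_adj (t : ℕ) : G.Adj (cycF H t) (cycF H (t+1)) := by
  show G.Adj (H.cyc (t % H.γ)) (H.cyc ((t+1) % H.γ))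
  have h1 : t % H.γ < H.γ := Nat.mod_lt _ (γpos H)
  have h := H.cycAdj (t % H.γ) h1
  have h2 : (t % H.γ + 1) % H.γ = (t+1) % H.γ := Nat.mod_add_mod t H.γ 1
  rwa [h2] at h

lemma cycF_inj {a b : ℕ} (h : cycF H a = cycF H b) : a % H.γ = b % H.γ :=
  H.cycInj _ _ (Nat.mod_lt _ (γpos H)) (Nat.mod_lt _ (γpos H)) h

def arcW (s n : ℕ) : G.Walk (cycF H s) (cycF H (s+n)) :=
  chainW G (cycF H) s n (fun t _ => cycF_adj H (s+t))

lemma arcW_support_mem {s n : ℕ} {x : V} (hx : x ∈ (arcW H s n).support) :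
    x ∈ cycVerts H.cyc H.γ := by
  rw [arcW, chainW_support] at hx
  obtain ⟨t, _, rfl⟩ := List.mem_map.mp hx
  exact cycF_mem H _

lemma arcW_isPath (s : ℕ) {n : ℕ} (hn : n < H.γ) : (arcW H s n).IsPath := by
  apply chainW_isPath
  intro t₁ t₂ h₁ h₂ heq
  have e1 : (s + t₁) % H.γ = (s + t₂) % H.γ := cycF_inj H heq
  have h3 : (s + t₁) ≡ (s + t₂) [MOD H.γ] := e1
  have h4 : t₁ ≡ t₂ [MOD H.γ] := Nat.ModEq.add_left_cancel' s h3
  have h5 : t₁ % H.γ = t₂ % H.γ := h4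
  rwa [Nat.mod_eq_of_lt (by omega), Nat.mod_eq_of_lt (by omega)] at h5

lemma arcW_first_edge (s : ℕ) {n : ℕ} (hn : 0 < n) :
    s(cycF H s, cycF H (s+1)) ∈ (arcW H s n).edges := by
  rw [arcW, chainW_edges]
  exact List.mem_map.mpr ⟨0, List.mem_range.mpr hn, by simp⟩

/-- an edge of the distinguished cycle -/
def CEdge (e : Sym2 V) : Prop := ∃ k, k < H.γ ∧ e = s(H.cyc k, H.cyc ((k+1) % H.γ))

lemma exists_arcPath {s s' : ℕ} (hs : s < H.γ) (hs' : s' < H.γ) (hne : s ≠ s') :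
    ∃ A : G.Walk (H.cyc s) (H.cyc s'), A.IsPath ∧ (∀ x ∈ A.support, x ∈ cycVerts H.cyc H.γ) ∧
      ∃ e ∈ A.edges, CEdge H e := by
  have hγ := γpos H
  set m := if s < s' then s' - s else H.γ + s' - s with hm
  have hmlt : m < H.γ := by rw [hm]; split_ifs <;> omega
  have hmpos : 0 < m := by rw [hm]; split_ifs <;> omega
  have hend : (s + m) % H.γ = s' := by
    rw [hm]; split_ifs with hlt
    · rw [Nat.mod_eq_of_lt (by omega)]; omega
    · have h2 : s + (H.γ + s' - s) = H.γ + s' := by omega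
      rw [h2, Nat.add_mod_left, Nat.mod_eq_of_lt hs']
  have hu : cycF H s = H.cyc s := by simp [cycF, Nat.mod_eq_of_lt hs]
  have hv : cycF H (s + m) = H.cyc s' := by simp [cycF, hend]
  refine ⟨(arcW H s m).copy hu hv, ?_, ?_, ?_⟩
  · rw [Walk.isPath_copy]
    exact arcW_isPath H s hmlt
  · intro x hx; rw [Walk.support_copy] at hx; exact arcW_support_mem H hx
  · refine ⟨s(cycF H s, cycF H (s+1)), ?_, ⟨s, hs, ?_⟩⟩
    · rw [Walk.edges_copy]; exact arcW_first_edge H s hmpos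
    · simp [cycF, Nat.mod_eq_of_lt hs]

/-- the distinguished cycle as a closed walk -/
def cycWalk : G.Walk (cycF H 0) (cycF H 0) :=
  Walk.cons (cycF_adj H 0) ((arcW H 1 (H.γ - 1)).copy rfl (show cycF H (1 + (H.γ - 1)) = cycF H 0 by
    have h : 1 + (H.γ - 1) = H.γ := by have := γpos H; omega
    simp [cycF, h, Nat.mod_self]))

lemma cycWalk_isCycle : (cycWalk H).IsCycle := by
  rw [cycWalk, Walk.cons_isCycle_iff]
  have hγ := H.hγ
  constructor
  · rw [Walk.isPath_copy]
    exact arcW_isPath H 1 (by omega)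
  · rw [Walk.edges_copy, arcW, chainW_edges]
    intro hmem
    obtain ⟨t, ht, heq⟩ := List.mem_map.mp hmem
    rw [List.mem_range] at ht
    rw [Sym2.eq_iff] at heq
    rcases heq with ⟨h1, h2⟩ | ⟨h1, h2⟩
    · have m1 := cycF_inj H h1
      rw [Nat.mod_eq_of_lt (show 1 + t < H.γ by omega), Nat.zero_mod] at m1
      omega
    · have m1 := cycF_inj H h1
      rw [Nat.mod_eq_of_lt (show 1 + t < H.γ by omega),
        Nat.mod_eq_of_lt (show 0 + 1 < H.γ by omega)] at m1
      have m2 := cycF_inj H h2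
      rw [Nat.zero_mod] at m2
      have ht0 : t = 0 := by omega
      subst ht0
      rw [Nat.mod_eq_of_lt (show 1 + 0 + 1 < H.γ by omega)] at m2
      omega

lemma cycWalk_support_mem {x : V} (hx : x ∈ (cycWalk H).support) :
    x ∈ cycVerts H.cyc H.γ := by
  rw [cycWalk, Walk.support_cons] at hx
  rcases List.mem_cons.mp hx with rfl | hx
  · exact cycF_mem H 0
  · rw [Walk.support_copy] at hx; exact arcW_support_mem H hx

lemma cEdge_mem_cycWalk {e : Sym2 V} (he : CEdge H e) : e ∈ (cycWalk H).edges := by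
  obtain ⟨k, hk, rfl⟩ := he
  have hγ := H.hγ
  rw [cycWalk, Walk.edges_cons, Walk.edges_copy, arcW, chainW_edges]
  rcases Nat.eq_zero_or_pos k with rfl | hkpos
  · refine List.mem_cons.mpr (Or.inl ?_)
    simp [cycF]
  · refine List.mem_cons.mpr (Or.inr (List.mem_map.mpr ⟨k - 1, List.mem_range.mpr (by omega), ?_⟩))
    have h1 : 1 + (k - 1) = k := by omega
    rw [h1]
    simp [cycF, Nat.mod_eq_of_lt hk]

end SpecialH

section Legs

lemma isom_adj {w : ℕ → V} {l : ℕ} (hw : IsIsomPath G w l) {t : ℕ} (ht : t < l) :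
    G.Adj (w t) (w (t+1)) := by
  have h := hw t (t+1) (by omega) (by omega)
  have h1 : G.dist (w t) (w (t+1)) = 1 := by rw [h]; omega
  exact SimpleGraph.dist_eq_one_iff_adj.mp h1

lemma isom_inj {w : ℕ → V} {l : ℕ} (hw : IsIsomPath G w l) {i j : ℕ}
    (hi : i ≤ l) (hj : j ≤ l) (h : w i = w j) : i = j := by
  have hd := hw i j hi hj
  rw [h, SimpleGraph.dist_self] at hd
  omega

def segWalk {w : ℕ → V} {l : ℕ} (hw : IsIsomPath G w l) (i j : ℕ)
    (hij : i ≤ j) (hj : j ≤ l) : G.Walk (w i) (w j) :=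
  (chainW G w i (j-i) (fun t ht => isom_adj hw (show i + t < l by omega))).copy rfl
    (by congr 1; omega)

lemma segWalk_support_mem {w : ℕ → V} {l : ℕ} {hw : IsIsomPath G w l} {i j : ℕ}
    {hij : i ≤ j} {hj : j ≤ l} {x : V} (hx : x ∈ (segWalk hw i j hij hj).support) :
    ∃ t, i ≤ t ∧ t ≤ j ∧ x = w t := by
  rw [segWalk, Walk.support_copy, chainW_support] at hx
  obtain ⟨t, htr, rfl⟩ := List.mem_map.mp hx
  rw [List.mem_range] at htr
  exact ⟨i+t, by omega, by omega, rfl⟩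

lemma segWalk_isPath {w : ℕ → V} {l : ℕ} (hw : IsIsomPath G w l) (i j : ℕ)
    (hij : i ≤ j) (hj : j ≤ l) : (segWalk hw i j hij hj).IsPath := by
  rw [segWalk, Walk.isPath_copy]
  apply chainW_isPath
  intro t₁ t₂ h₁ h₂ heq
  have := isom_inj hw (show i + t₁ ≤ l by omega) (show i + t₂ ≤ l by omega) heq
  omega

lemma segWalk_edges_mem {w : ℕ → V} {l : ℕ} {hw : IsIsomPath G w l} {i j : ℕ}
    {hij : i ≤ j} {hj : j ≤ l} {e : Sym2 V} (he : e ∈ (segWalk hw i j hij hj).edges) :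
    ∃ t, i ≤ t ∧ t < j ∧ e = s(w t, w (t+1)) := by
  rw [segWalk, Walk.edges_copy, chainW_edges] at he
  obtain ⟨t, htr, rfl⟩ := List.mem_map.mp he
  rw [List.mem_range] at htr
  exact ⟨i+t, by omega, by omega, rfl⟩

lemma mem_segWalk_edges {w : ℕ → V} {l : ℕ} (hw : IsIsomPath G w l) {i j : ℕ}
    (hij : i ≤ j) (hj : j ≤ l) {t : ℕ} (ht1 : i ≤ t) (ht2 : t < j) :
    s(w t, w (t+1)) ∈ (segWalk hw i j hij hj).edges := by
  rw [segWalk, Walk.edges_copy, chainW_edges]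
  refine List.mem_map.mpr ⟨t - i, List.mem_range.mpr (by omega), ?_⟩
  have h : i + (t - i) = t := by omega
  rw [h]

variable (H : SpecialSubgraph G)

def legw : Fin 3 → ℕ → V
  | ⟨0, _⟩ => H.pw
  | ⟨1, _⟩ => H.qw
  | ⟨2, _⟩ => H.rw

def legL : Fin 3 → ℕ
  | ⟨0, _⟩ => H.la
  | ⟨1, _⟩ => H.lb
  | ⟨2, _⟩ => H.ld

def legT : Fin 3 → ℕ
  | ⟨0, _⟩ => H.t₀
  | ⟨1, _⟩ => H.t₁
  | ⟨2, _⟩ => H.t₂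

def legV (k : Fin 3) : Set V := pathVerts (legw H k) (legL H k)

lemma leg_isom (k : Fin 3) : IsIsomPath G (legw H k) (legL H k) := by
  fin_cases k
  · exact H.hp
  · exact H.hq
  · exact H.hr

lemma legT_lt (k : Fin 3) : legT H k < H.γ := by
  fin_cases k
  · exact H.ht₀
  · exact H.ht₁
  · exact H.ht₂

lemma legT_ne {k k' : Fin 3} (h : k ≠ k') : legT H k ≠ legT H k' := by
  have h1 := H.hne
  fin_cases k <;> fin_cases k' <;> simp_all [legT] <;> omega

lemma leg0 (k : Fin 3) : legw H k 0 = H.cyc (legT H k) := by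
  fin_cases k
  · exact H.hp0
  · exact H.hq0
  · exact H.hr0

lemma meet_leg (k : Fin 3) : legV H k ∩ cycVerts H.cyc H.γ = {H.cyc (legT H k)} := by
  fin_cases k
  · exact H.meetP
  · exact H.meetQ
  · exact H.meetR

lemma disj_leg {k k' : Fin 3} (h : k ≠ k') : legV H k ∩ legV H k' = ∅ := by
  fin_cases k <;> fin_cases k' <;>
    first
      | exact absurd rfl h
      | exact H.disjPQ
      | exact H.disjQR
      | exact H.disjPR
      | (rw [Set.inter_comm]
         first
           | exact H.disjPQ
           | exact H.disjQR
           | exact H.disjPR)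

lemma legV_sub (k : Fin 3) : legV H k ⊆ H.verts := by
  fin_cases k <;> intro x hx
  · exact Set.mem_union_left _ (Set.mem_union_left _ (Set.mem_union_right _ hx))
  · exact Set.mem_union_left _ (Set.mem_union_right _ hx)
  · exact Set.mem_union_right _ hx

lemma cycV_sub : cycVerts H.cyc H.γ ⊆ H.verts := fun _ hx =>
  Set.mem_union_left _ (Set.mem_union_left _ (Set.mem_union_left _ hx))

lemma verts_cases {x : V} (hx : x ∈ H.verts) :
    (∃ k, x ∈ legV H k) ∨ (x ∈ cycVerts H.cyc H.γ ∧ ∀ k, x ∉ legV H k) := by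
  by_cases h : ∃ k, x ∈ legV H k
  · exact Or.inl h
  · push_neg at h
    refine Or.inr ⟨?_, h⟩
    rcases hx with ((hc | hp) | hq) | hr
    · exact hc
    · exact absurd hp (h ⟨0, by omega⟩)
    · exact absurd hq (h ⟨1, by omega⟩)
    · exact absurd hr (h ⟨2, by omega⟩)

/-- junction property of the meet lemma -/
lemma meet_leg' {k : Fin 3} {x : V} (h1 : x ∈ legV H k) (h2 : x ∈ cycVerts H.cyc H.γ) :
    x = H.cyc (legT H k) := by
  have := meet_leg H k
  have hx : x ∈ legV H k ∩ cycVerts H.cyc H.γ := ⟨h1, h2⟩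
  rw [this] at hx
  exact hx

lemma disj_leg' {k k' : Fin 3} (h : k ≠ k') {x : V} (h1 : x ∈ legV H k)
    (h2 : x ∈ legV H k') : False := by
  have := disj_leg H h
  have hx : x ∈ legV H k ∩ legV H k' := ⟨h1, h2⟩
  rw [this] at hx
  exact hx

end Legs

section Cross

variable (H : SpecialSubgraph G)

/-- two vertices lying on a common pendant leg -/
def SameLeg (e₁ e₂ : V) : Prop :=
  ∃ (k : Fin 3) (i j : ℕ), i ≤ legL H k ∧ j ≤ legL H k ∧ legw H k i = e₁ ∧ legw H k j = e₂

lemma sameLeg_symm {e₁ e₂ : V} (h : SameLeg H e₁ e₂) : SameLeg H e₂ e₁ := by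
  obtain ⟨k, i, j, hi, hj, h1, h2⟩ := h
  exact ⟨k, j, i, hj, hi, h2, h1⟩

lemma mem_legV_iff {k : Fin 3} {x : V} : x ∈ legV H k ↔ ∃ i, i ≤ legL H k ∧ legw H k i = x :=
  Iff.rfl

/-- path from a leg vertex down the leg and around the cycle to `cyc s'` -/
lemma leg_to_cyc {k : Fin 3} {i : ℕ} (hi : i ≤ legL H k) {s' : ℕ} (hs' : s' < H.γ)
    (hne : s' ≠ legT H k) :
    ∃ P : G.Walk (legw H k i) (H.cyc s'), P.IsPath ∧
      (∀ x ∈ P.support, x ∈ legV H k ∪ cycVerts H.cyc H.γ) ∧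
      (∃ e ∈ P.edges, CEdge H e) := by
  obtain ⟨A, hA, hAs, hAe⟩ := exists_arcPath H (legT_lt H k) hs' (Ne.symm hne)
  have hB0 : (segWalk (leg_isom H k) 0 i (by omega) hi).reverse.IsPath :=
    (segWalk_isPath (leg_isom H k) 0 i (by omega) hi).reverse
  set B := ((segWalk (leg_isom H k) 0 i (by omega) hi).reverse).copy rfl (leg0 H k)
    with hBdef
  have hBp : B.IsPath := by rw [hBdef, Walk.isPath_copy]; exact hB0
  have hBs : ∀ x ∈ B.support, x ∈ legV H k := by
    intro x hx
    rw [hBdef, Walk.support_copy, Walk.support_reverse, List.mem_reverse] at hx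
    obtain ⟨t, _, ht2, rfl⟩ := segWalk_support_mem hx
    exact ⟨t, by omega, rfl⟩
  refine ⟨B.append A, ?_, ?_, ?_⟩
  · refine isPath_append hBp hA ?_
    intro x hx1 hx2
    exact meet_leg' H (hBs x hx1) (hAs x hx2)
  · intro x hx
    rcases (Walk.mem_support_append_iff _ _).mp hx with hx | hx
    · exact Or.inl (hBs x hx)
    · exact Or.inr (hAs x hx)
  · obtain ⟨e, he, hce⟩ := hAe
    exact ⟨e, by rw [Walk.edges_append]; exact List.mem_append_right _ he, hce⟩

/-- key: between two vertices of H not on a common leg there is a path inside H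
containing an edge of the distinguished cycle -/
lemma exists_crossPath {e₁ e₂ : V} (h₁ : e₁ ∈ H.verts) (h₂ : e₂ ∈ H.verts)
    (hne : e₁ ≠ e₂) (hns : ¬ SameLeg H e₁ e₂) :
    ∃ P : G.Walk e₁ e₂, P.IsPath ∧ (∀ x ∈ P.support, x ∈ H.verts) ∧
      ∃ e ∈ P.edges, CEdge H e := by
  rcases verts_cases H h₁ with ⟨k, hk⟩ | ⟨hc1, hnl1⟩
  · obtain ⟨i, hi, hei⟩ := hk
    rcases verts_cases H h₂ with ⟨k', hk'⟩ | ⟨hc2, hnl2⟩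
    · obtain ⟨j, hj, hej⟩ := hk'
      have hkk : k ≠ k' := by
        rintro rfl
        exact hns ⟨k, i, j, hi, hj, hei, hej⟩
      -- leg to leg
      obtain ⟨P1, hP1, hP1s, hP1e⟩ := leg_to_cyc H hi (legT_lt H k') (legT_ne H (Ne.symm hkk))
      have hB0 : (segWalk (leg_isom H k') 0 j (by omega) hj).IsPath :=
        segWalk_isPath (leg_isom H k') 0 j (by omega) hj
      set B := ((segWalk (leg_isom H k') 0 j (by omega) hj).copy (leg0 H k') rfl) with hBdef
      have hBp : B.IsPath := by rw [hBdef, Walk.isPath_copy]; exact hB0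
      have hBs : ∀ x ∈ B.support, x ∈ legV H k' := by
        intro x hx
        rw [hBdef, Walk.support_copy] at hx
        obtain ⟨t, _, ht2, rfl⟩ := segWalk_support_mem hx
        exact ⟨t, by omega, rfl⟩
      rw [← hei, ← hej]
      refine ⟨P1.append B, ?_, ?_, ?_⟩
      · refine isPath_append hP1 hBp ?_
        intro x hx1 hx2
        rcases hP1s x hx1 with hx1' | hx1'
        · exact absurd (disj_leg' H hkk hx1' (hBs x hx2)) not_false
        · exact meet_leg' H (hBs x hx2) hx1'
      · intro x hx
        rcases (Walk.mem_support_append_iff _ _).mp hx with hx | hx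
        · rcases hP1s x hx with h | h
          · exact legV_sub H k h
          · exact cycV_sub H h
        · exact legV_sub H k' (hBs x hx)
      · obtain ⟨e, he, hce⟩ := hP1e
        exact ⟨e, by rw [Walk.edges_append]; exact List.mem_append_left _ he, hce⟩
    · -- leg to pure cycle vertex
      obtain ⟨s', hs', hes⟩ := hc2
      have hsne : s' ≠ legT H k := by
        rintro rfl
        exact hnl2 k ⟨0, by omega, by rw [leg0 H k, hes]⟩
      obtain ⟨P, hP, hPs, hPe⟩ := leg_to_cyc H hi hs' hsne
      rw [← hei, ← hes]
      refine ⟨P, hP, ?_, hPe⟩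
      intro x hx
      rcases hPs x hx with h | h
      · exact legV_sub H k h
      · exact cycV_sub H h
  · rcases verts_cases H h₂ with ⟨k', hk'⟩ | ⟨hc2, hnl2⟩
    · -- pure cycle vertex to leg: symmetric
      obtain ⟨j, hj, hej⟩ := hk'
      obtain ⟨s, hs, hes⟩ := hc1
      have hsne : s ≠ legT H k' := by
        rintro rfl
        exact hnl1 k' ⟨0, by omega, by rw [leg0 H k', hes]⟩
      obtain ⟨P, hP, hPs, hPe⟩ := leg_to_cyc H hj hs hsne
      rw [← hej, ← hes]
      refine ⟨P.reverse, hP.reverse, ?_, ?_⟩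
      · intro x hx
        rw [Walk.support_reverse, List.mem_reverse] at hx
        rcases hPs x hx with h | h
        · exact legV_sub H k' h
        · exact cycV_sub H h
      · obtain ⟨e, he, hce⟩ := hPe
        refine ⟨e, ?_, hce⟩
        rw [Walk.edges_reverse, List.mem_reverse]
        exact he
    · -- cycle to cycle
      obtain ⟨s, hs, hes⟩ := hc1
      obtain ⟨s', hs', hes'⟩ := hc2
      have hsne : s ≠ s' := by
        rintro rfl
        exact hne (hes ▸ hes' ▸ rfl)
      obtain ⟨A, hA, hAs, hAe⟩ := exists_arcPath H hs hs' hsne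
      rw [← hes, ← hes']
      exact ⟨A, hA, fun x hx => cycV_sub H (hAs x hx), hAe⟩

end Cross

section EntryJunction

lemma entry_key (S : Set V) {a u : V} (W : G.Walk a u) :
    u ∈ S → ∃ e, e ∈ S ∧ ∃ (P : G.Walk a e) (Q : G.Walk e u),
      (∀ x ∈ P.support, x ∈ S → x = e) ∧ P.length + Q.length = W.length := by
  induction W with
  | nil => exact fun hu => ⟨_, hu, Walk.nil, Walk.nil, by simp, by simp⟩
  | @cons a b u hadj W ih =>
    intro hu
    by_cases ha : a ∈ S
    · refine ⟨a, ha, Walk.nil, Walk.cons hadj W, by simp, by simp⟩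
    · obtain ⟨e, he, P, Q, hprop, hlen⟩ := ih hu
      refine ⟨e, he, Walk.cons hadj P, Q, ?_, ?_⟩
      · intro x hx hxS
        rw [Walk.support_cons] at hx
        rcases List.mem_cons.mp hx with rfl | hx
        · exact absurd hxS ha
        · exact hprop x hx hxS
      · rw [Walk.length_cons, Walk.length_cons]; omega

/-- from any vertex, to each vertex of S there is an "entry point" into S -/
lemma exists_entry (hc : G.Connected) (S : Set V) (v u : V) (hu : u ∈ S) :
    ∃ e, e ∈ S ∧ ∃ P : G.Walk v e, P.IsPath ∧ (∀ x ∈ P.support, x ∈ S → x = e) ∧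
      G.dist v u = G.dist v e + G.dist e u := by
  classical
  obtain ⟨W, hWp, hWl⟩ := hc.exists_path_of_dist v u
  obtain ⟨e, he, P, Q, hprop, hlen⟩ := entry_key S W hu
  have h1 : G.dist v e ≤ P.length := SimpleGraph.dist_le P
  have h2 : G.dist e u ≤ Q.length := SimpleGraph.dist_le Q
  have h3 : G.dist v u ≤ G.dist v e + G.dist e u := hc.dist_triangle
  have h4 : G.dist v e = P.length ∧ G.dist v u = G.dist v e + G.dist e u := by omega
  refine ⟨e, he, P.bypass, Walk.bypass_isPath P, ?_, h4.2⟩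
  intro x hx hxS
  exact hprop x (Walk.support_bypass_subset P hx) hxS

/-- from two paths with common start, extract a junction vertex with
internally disjoint tails -/
lemma exists_junction (n : ℕ) :
    ∀ {v e₁ e₂ : V} (P₁ : G.Walk v e₁) (P₂ : G.Walk v e₂), P₁.length ≤ n →
    P₁.IsPath → P₂.IsPath →
    ∃ (w : V) (Q₁ : G.Walk w e₁) (Q₂ : G.Walk w e₂), Q₁.IsPath ∧ Q₂.IsPath ∧
      (∀ x ∈ Q₁.support, x ∈ P₁.support) ∧ (∀ x ∈ Q₂.support, x ∈ P₂.support) ∧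
      (∀ x, x ∈ Q₁.support → x ∈ Q₂.support → x = w) := by
  classical
  induction n with
  | zero =>
    intro v e₁ e₂ P₁ P₂ hlen h₁ h₂
    by_cases hsh : ∀ x, x ∈ P₁.support → x ∈ P₂.support → x = v
    · exact ⟨v, P₁, P₂, h₁, h₂, fun x hx => hx, fun x hx => hx, hsh⟩
    · exfalso
      push_neg at hsh
      obtain ⟨x, hx₁, hx₂, hxv⟩ := hsh
      have ht := Walk.length_takeUntil_le P₁ hx₁
      have hspec := Walk.take_spec P₁ hx₁
      have : (P₁.takeUntil x hx₁).length + (P₁.dropUntil x hx₁).length = P₁.length := by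
        rw [← Walk.length_append, hspec]
      have hpos : 0 < (P₁.takeUntil x hx₁).length := by
        rcases Nat.eq_zero_or_pos (P₁.takeUntil x hx₁).length with h0 | h
        · exact absurd (Walk.eq_of_length_eq_zero h0).symm hxv
        · exact h
      omega
  | succ n ih =>
    intro v e₁ e₂ P₁ P₂ hlen h₁ h₂
    by_cases hsh : ∀ x, x ∈ P₁.support → x ∈ P₂.support → x = v
    · exact ⟨v, P₁, P₂, h₁, h₂, fun x hx => hx, fun x hx => hx, hsh⟩
    · push_neg at hsh
      obtain ⟨x, hx₁, hx₂, hxv⟩ := hsh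
      have hspec := Walk.take_spec P₁ hx₁
      have hsum : (P₁.takeUntil x hx₁).length + (P₁.dropUntil x hx₁).length = P₁.length := by
        rw [← Walk.length_append, hspec]
      have hpos : 0 < (P₁.takeUntil x hx₁).length := by
        rcases Nat.eq_zero_or_pos (P₁.takeUntil x hx₁).length with h0 | h
        · exact absurd (Walk.eq_of_length_eq_zero h0).symm hxv
        · exact h
      obtain ⟨w, Q₁, Q₂, hq₁, hq₂, hs₁, hs₂, hj⟩ :=
        ih (P₁.dropUntil x hx₁) (P₂.dropUntil x hx₂) (by omega)
          (h₁.dropUntil hx₁) (h₂.dropUntil hx₂)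
      exact ⟨w, Q₁, Q₂, hq₁, hq₂,
        fun y hy => Walk.support_dropUntil_subset P₁ hx₁ (hs₁ y hy),
        fun y hy => Walk.support_dropUntil_subset P₂ hx₂ (hs₂ y hy), hj⟩

end EntryJunction

section Core

lemma edge_endpoint_outside (S : Set V) {w e₀ : V} {Q : G.Walk w e₀}
    (hQ : ∀ y ∈ Q.support, y ∈ S → y = e₀) {e : Sym2 V} (he : e ∈ Q.edges) :
    ∃ a b, e = s(a,b) ∧ a ∉ S := by
  induction e using Sym2.ind with
  | _ a b =>
    have hadj : G.Adj a b := Walk.adj_of_mem_edges Q he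
    have ha : a ∈ Q.support := Walk.fst_mem_support_of_mem_edges Q he
    have hb : b ∈ Q.support := Walk.snd_mem_support_of_mem_edges Q he
    by_cases haH : a ∈ S
    · by_cases hbH : b ∈ S
      · exact absurd ((hQ a ha haH).trans (hQ b hb hbH).symm) hadj.ne
      · exact ⟨b, a, Sym2.eq_swap, hbH⟩
    · exact ⟨a, b, rfl, haH⟩

variable (H : SpecialSubgraph G)

lemma cycle_of_two_paths {v e₁ e₂ : V} (hv : v ∉ H.verts) (hne : e₁ ≠ e₂)
    (he₁ : e₁ ∈ H.verts) (he₂ : e₂ ∈ H.verts)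
    {P₁ : G.Walk v e₁} {P₂ : G.Walk v e₂} (hP₁ : P₁.IsPath) (hP₂ : P₂.IsPath)
    (hA₁ : ∀ x ∈ P₁.support, x ∈ H.verts → x = e₁)
    (hA₂ : ∀ x ∈ P₂.support, x ∈ H.verts → x = e₂)
    (HP : G.Walk e₁ e₂) (hHP : HP.IsPath) (hHPs : ∀ x ∈ HP.support, x ∈ H.verts) :
    ∃ (w : V) (Z : G.Walk w w), Z.IsCycle ∧ (∀ e ∈ HP.edges, e ∈ Z.edges) ∧
      (∀ e ∈ Z.edges, e ∈ HP.edges ∨ ∃ a b, e = s(a,b) ∧ a ∉ H.verts) ∧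
      (∃ e ∈ Z.edges, ∃ a b, e = s(a,b) ∧ a ∉ H.verts) := by
  obtain ⟨w, Q₁, Q₂, hq₁, hq₂, hs₁, hs₂, hj⟩ :=
    exists_junction P₁.length P₁ P₂ le_rfl hP₁ hP₂
  have hwH : w ∉ H.verts := by
    intro hw
    have h1 : w = e₁ := hA₁ w (hs₁ w Q₁.start_mem_support) hw
    have h2 : w = e₂ := hA₂ w (hs₂ w Q₂.start_mem_support) hw
    exact hne (h1.symm.trans h2)
  have hwe₁ : w ≠ e₁ := fun h => hwH (h ▸ he₁)
  obtain ⟨x, hadj, Q₁', hQeq⟩ := Walk.exists_eq_cons_of_ne hwe₁ Q₁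
  have hq₁'pair : Q₁'.IsPath ∧ w ∉ Q₁'.support := by
    rw [hQeq, Walk.cons_isPath_iff] at hq₁
    exact ⟨hq₁.1, hq₁.2⟩
  have hs₁' : ∀ y ∈ Q₁'.support, y ∈ Q₁.support := by
    intro y hy; rw [hQeq, Walk.support_cons]; exact List.mem_cons_of_mem _ hy
  have hAQ₁ : ∀ y ∈ Q₁.support, y ∈ H.verts → y = e₁ := fun y hy => hA₁ y (hs₁ y hy)
  have hAQ₂ : ∀ y ∈ Q₂.support, y ∈ H.verts → y = e₂ := fun y hy => hA₂ y (hs₂ y hy)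
  have hInner : (HP.append Q₂.reverse).IsPath := by
    refine isPath_append hHP hq₂.reverse ?_
    intro y hy1 hy2
    rw [Walk.support_reverse, List.mem_reverse] at hy2
    exact hAQ₂ y hy2 (hHPs y hy1)
  have hT : (Q₁'.append (HP.append Q₂.reverse)).IsPath := by
    refine isPath_append hq₁'pair.1 hInner ?_
    intro y hy1 hy2
    rcases (Walk.mem_support_append_iff _ _).mp hy2 with hy2 | hy2
    · exact hAQ₁ y (hs₁' y hy1) (hHPs y hy2)
    · rw [Walk.support_reverse, List.mem_reverse] at hy2
      have hyw : y = w := hj y (hs₁' y hy1) hy2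
      exact absurd (hyw ▸ hy1) hq₁'pair.2
  have hedge : s(w,x) ∉ (Q₁'.append (HP.append Q₂.reverse)).edges := by
    intro hmem
    rw [Walk.edges_append] at hmem
    rcases List.mem_append.mp hmem with hmem | hmem
    · exact hq₁'pair.2 (Walk.fst_mem_support_of_mem_edges Q₁' hmem)
    · rw [Walk.edges_append] at hmem
      rcases List.mem_append.mp hmem with hmem | hmem
      · exact hwH (hHPs w (Walk.fst_mem_support_of_mem_edges HP hmem))
      · rw [Walk.edges_reverse, List.mem_reverse] at hmem
        have hx2 : x ∈ Q₂.support := Walk.snd_mem_support_of_mem_edges Q₂ hmem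
        have hx1 : x ∈ Q₁.support := hs₁' x Q₁'.start_mem_support
        exact hadj.ne (hj x hx1 hx2).symm
  refine ⟨w, Walk.cons hadj (Q₁'.append (HP.append Q₂.reverse)), ?_, ?_, ?_, ?_⟩
  · exact (Walk.cons_isCycle_iff _ hadj).mpr ⟨hT, hedge⟩
  · intro e he
    rw [Walk.edges_cons]
    refine List.mem_cons_of_mem _ ?_
    rw [Walk.edges_append]
    exact List.mem_append_right _ (by rw [Walk.edges_append]; exact List.mem_append_left _ he)
  · intro e he
    rw [Walk.edges_cons] at he
    rcases List.mem_cons.mp he with rfl | he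
    · exact Or.inr ⟨w, x, rfl, hwH⟩
    · rw [Walk.edges_append] at he
      rcases List.mem_append.mp he with he | he
      · refine Or.inr (edge_endpoint_outside H.verts hAQ₁ ?_)
        rw [hQeq, Walk.edges_cons]
        exact List.mem_cons_of_mem _ he
      · rw [Walk.edges_append] at he
        rcases List.mem_append.mp he with he | he
        · exact Or.inl he
        · rw [Walk.edges_reverse, List.mem_reverse] at he
          exact Or.inr (edge_endpoint_outside H.verts hAQ₂ he)
  · refine ⟨s(w,x), ?_, ⟨w, x, rfl, hwH⟩⟩
    rw [Walk.edges_cons]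
    exact List.mem_cons_self

lemma entries_sameLeg (hG : IsCactus G) {v e₁ e₂ : V} (hv : v ∉ H.verts) (hne : e₁ ≠ e₂)
    (he₁ : e₁ ∈ H.verts) (he₂ : e₂ ∈ H.verts)
    {P₁ : G.Walk v e₁} {P₂ : G.Walk v e₂} (hP₁ : P₁.IsPath) (hP₂ : P₂.IsPath)
    (hA₁ : ∀ x ∈ P₁.support, x ∈ H.verts → x = e₁)
    (hA₂ : ∀ x ∈ P₂.support, x ∈ H.verts → x = e₂) : SameLeg H e₁ e₂ := by
  by_contra hns
  obtain ⟨HP, hHP, hHPs, e₀, he₀, hce₀⟩ := exists_crossPath H he₁ he₂ hne hns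
  obtain ⟨w, Z, hZ, hsub, hchar, hex⟩ :=
    cycle_of_two_paths H hv hne he₁ he₂ hP₁ hP₂ hA₁ hA₂ HP hHP hHPs
  have hCW := cycWalk_isCycle H
  have hiff := hG.2 w (cycF H 0) Z (cycWalk H) hZ hCW e₀ (hsub e₀ he₀)
    (cEdge_mem_cycWalk H hce₀)
  obtain ⟨e', he'Z, a, b, heq, haH⟩ := hex
  have h1 : e' ∈ (cycWalk H).edges := (hiff e').mp he'Z
  subst heq
  exact haH (cycV_sub H (cycWalk_support_mem H (Walk.fst_mem_support_of_mem_edges _ h1)))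

lemma three_entries_false (hG : IsCactus G) {v : V} (hv : v ∉ H.verts) (k : Fin 3)
    {n₁ n₂ n₃ : ℕ} (h12 : n₁ < n₂) (h23 : n₂ < n₃) (h3 : n₃ ≤ legL H k)
    {P₁ : G.Walk v (legw H k n₁)} {P₂ : G.Walk v (legw H k n₂)} {P₃ : G.Walk v (legw H k n₃)}
    (hP₁ : P₁.IsPath) (hP₂ : P₂.IsPath) (hP₃ : P₃.IsPath)
    (hA₁ : ∀ x ∈ P₁.support, x ∈ H.verts → x = legw H k n₁)
    (hA₂ : ∀ x ∈ P₂.support, x ∈ H.verts → x = legw H k n₂)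
    (hA₃ : ∀ x ∈ P₃.support, x ∈ H.verts → x = legw H k n₃) : False := by
  have hiso := leg_isom H k
  have hmem : ∀ t, t ≤ legL H k → legw H k t ∈ H.verts :=
    fun t ht => legV_sub H k ⟨t, ht, rfl⟩
  have hinj12 : legw H k n₁ ≠ legw H k n₂ := fun h => by
    have := isom_inj hiso (by omega) (by omega) h; omega
  have hinj13 : legw H k n₁ ≠ legw H k n₃ := fun h => by
    have := isom_inj hiso (by omega) (by omega) h; omega
  have hS12s : ∀ x ∈ (segWalk hiso n₁ n₂ (by omega) (by omega)).support, x ∈ H.verts := by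
    intro x hx
    obtain ⟨t, h1, h2, rfl⟩ := segWalk_support_mem hx
    exact hmem t (by omega)
  have hS13s : ∀ x ∈ (segWalk hiso n₁ n₃ (by omega) h3).support, x ∈ H.verts := by
    intro x hx
    obtain ⟨t, h1, h2, rfl⟩ := segWalk_support_mem hx
    exact hmem t (by omega)
  obtain ⟨w, Z12, hZ12, hsub12, hchar12, _⟩ :=
    cycle_of_two_paths H hv hinj12 (hmem _ (by omega)) (hmem _ (by omega)) hP₁ hP₂ hA₁ hA₂
      (segWalk hiso n₁ n₂ (by omega) (by omega))
      (segWalk_isPath hiso n₁ n₂ (by omega) (by omega)) hS12s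
  obtain ⟨w', Z13, hZ13, hsub13, _, _⟩ :=
    cycle_of_two_paths H hv hinj13 (hmem _ (by omega)) (hmem _ (by omega)) hP₁ hP₃ hA₁ hA₃
      (segWalk hiso n₁ n₃ (by omega) h3)
      (segWalk_isPath hiso n₁ n₃ (by omega) h3) hS13s
  have hf12 : s(legw H k n₁, legw H k (n₁+1)) ∈ Z12.edges :=
    hsub12 _ (mem_segWalk_edges hiso (by omega) (by omega) le_rfl h12)
  have hf13 : s(legw H k n₁, legw H k (n₁+1)) ∈ Z13.edges :=
    hsub13 _ (mem_segWalk_edges hiso (by omega) h3 le_rfl (by omega))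
  have hiff := hG.2 w' w Z13 Z12 hZ13 hZ12 _ hf13 hf12
  have hg13 : s(legw H k n₂, legw H k (n₂+1)) ∈ Z13.edges :=
    hsub13 _ (mem_segWalk_edges hiso (by omega) h3 (by omega) h23)
  have hg12 : s(legw H k n₂, legw H k (n₂+1)) ∈ Z12.edges := (hiff _).mp hg13
  rcases hchar12 _ hg12 with hseg | ⟨a, b, heq, haH⟩
  · obtain ⟨t, ht1, ht2, heq⟩ := segWalk_edges_mem hseg
    rw [Sym2.eq_iff] at heq
    rcases heq with ⟨u1, u2⟩ | ⟨u1, u2⟩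
    · have := isom_inj hiso (show n₂ ≤ legL H k by omega) (show t ≤ legL H k by omega) u1
      omega
    · have e1 := isom_inj hiso (show n₂ ≤ legL H k by omega) (show t+1 ≤ legL H k by omega) u1
      have e2 := isom_inj hiso (show n₂+1 ≤ legL H k by omega) (show t ≤ legL H k by omega) u2
      omega
  · rw [Sym2.eq_iff] at heq
    rcases heq with ⟨u1, u2⟩ | ⟨u1, u2⟩
    · exact haH (u1 ▸ hmem n₂ (by omega))
    · exact haH (u2 ▸ hmem (n₂+1) (by omega))

lemma three_entries_any (hG : IsCactus G) {v : V} (hv : v ∉ H.verts) (k : Fin 3)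
    {n₁ n₂ n₃ : ℕ} (h12 : n₁ ≠ n₂) (h13 : n₁ ≠ n₃) (h23 : n₂ ≠ n₃)
    (b₁ : n₁ ≤ legL H k) (b₂ : n₂ ≤ legL H k) (b₃ : n₃ ≤ legL H k)
    {P₁ : G.Walk v (legw H k n₁)} {P₂ : G.Walk v (legw H k n₂)} {P₃ : G.Walk v (legw H k n₃)}
    (hP₁ : P₁.IsPath) (hP₂ : P₂.IsPath) (hP₃ : P₃.IsPath)
    (hA₁ : ∀ x ∈ P₁.support, x ∈ H.verts → x = legw H k n₁)
    (hA₂ : ∀ x ∈ P₂.support, x ∈ H.verts → x = legw H k n₂)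
    (hA₃ : ∀ x ∈ P₃.support, x ∈ H.verts → x = legw H k n₃) : False := by
  rcases Nat.lt_trichotomy n₁ n₂ with h | h | h
  · rcases Nat.lt_trichotomy n₂ n₃ with h' | h' | h'
    · exact three_entries_false H hG hv k h h' b₃ hP₁ hP₂ hP₃ hA₁ hA₂ hA₃
    · exact absurd h' h23
    · rcases Nat.lt_trichotomy n₁ n₃ with h'' | h'' | h''
      · exact three_entries_false H hG hv k h'' h' b₂ hP₁ hP₃ hP₂ hA₁ hA₃ hA₂
      · exact absurd h'' h13
      · exact three_entries_false H hG hv k h'' h b₂ hP₃ hP₁ hP₂ hA₃ hA₁ hA₂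
  · exact absurd h h12
  · rcases Nat.lt_trichotomy n₁ n₃ with h' | h' | h'
    · exact three_entries_false H hG hv k h h' b₃ hP₂ hP₁ hP₃ hA₂ hA₁ hA₃
    · exact absurd h' h13
    · rcases Nat.lt_trichotomy n₂ n₃ with h'' | h'' | h''
      · exact three_entries_false H hG hv k h'' h' b₁ hP₂ hP₃ hP₁ hA₂ hA₃ hA₁
      · exact absurd h'' h23
      · exact three_entries_false H hG hv k h'' h b₁ hP₃ hP₂ hP₁ hA₃ hA₂ hA₁

end Core

section Gate

variable (H : SpecialSubgraph G)

lemma gate_of_two (hc : G.Connected) (k : Fin 3) {v : V} {i j : ℕ} (hij : i < j)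
    (hj : j ≤ legL H k)
    (hall : ∀ u ∈ H.verts, G.dist v u = G.dist v (legw H k i) + G.dist (legw H k i) u ∨
      G.dist v u = G.dist v (legw H k j) + G.dist (legw H k j) u) :
    ∃ v' ∈ H.verts, ∀ u ∈ H.verts, G.dist v' u ≤ G.dist v u := by
  have hiso := leg_isom H k
  have hdij : G.dist (legw H k i) (legw H k j) = j - i := by
    have h := hiso i j (by omega) hj; rw [h]; omega
  have htri : j - i ≤ G.dist v (legw H k i) + G.dist v (legw H k j) := by
    have h1 : G.dist (legw H k i) (legw H k j) ≤
        G.dist (legw H k i) v + G.dist v (legw H k j) := hc.dist_triangle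
    rw [SimpleGraph.dist_comm (u := legw H k i) (v := v)] at h1
    omega
  set m := min (G.dist v (legw H k i)) (j - i) with hm
  refine ⟨legw H k (i+m), legV_sub H k ⟨i+m, by omega, rfl⟩, ?_⟩
  intro u hu
  have d1 : G.dist (legw H k (i+m)) (legw H k i) = m := by
    have h := hiso (i+m) i (by omega) (by omega); rw [h]; omega
  have d2 : G.dist (legw H k (i+m)) (legw H k j) = j - i - m := by
    have h := hiso (i+m) j (by omega) hj; rw [h]; omega
  rcases hall u hu with h | h
  · have t1 : G.dist (legw H k (i+m)) u ≤
        G.dist (legw H k (i+m)) (legw H k i) + G.dist (legw H k i) u := hc.dist_triangle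
    omega
  · have t1 : G.dist (legw H k (i+m)) u ≤
        G.dist (legw H k (i+m)) (legw H k j) + G.dist (legw H k j) u := hc.dist_triangle
    omega

lemma gate (hG : IsCactus G) (v : V) :
    ∃ v' ∈ H.verts, ∀ u ∈ H.verts, G.dist v' u ≤ G.dist v u := by
  classical
  by_cases hv : v ∈ H.verts
  · exact ⟨v, hv, fun u _ => le_rfl⟩
  have hc := hG.1
  have hent := fun (u : V) (hu : u ∈ H.verts) => exists_entry hc H.verts v u hu
  choose ent hentS P hP hAv hroute using hent
  by_cases hone : ∀ u₁ (h₁ : u₁ ∈ H.verts) u₂ (h₂ : u₂ ∈ H.verts), ent u₁ h₁ = ent u₂ h₂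
  · have hcyc0 : H.cyc 0 ∈ H.verts := cycV_sub H ⟨0, γpos H, rfl⟩
    refine ⟨ent _ hcyc0, hentS _ hcyc0, ?_⟩
    intro u hu
    have hr := hroute u hu
    rw [hone u hu _ hcyc0] at hr
    omega
  · push_neg at hone
    obtain ⟨u₁, h₁, u₂, h₂, hne⟩ := hone
    have hSL := entries_sameLeg H hG hv hne (hentS u₁ h₁) (hentS u₂ h₂)
      (hP u₁ h₁) (hP u₂ h₂) (hAv u₁ h₁) (hAv u₂ h₂)
    obtain ⟨k, i, j, hi, hj, hei, hej⟩ := hSL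
    have hiso := leg_isom H k
    have hijne : i ≠ j := by
      rintro rfl
      exact hne (hei.symm.trans hej)
    -- transported paths
    have mk : ∀ (n : ℕ) (u : V) (hu : u ∈ H.verts), legw H k n = ent u hu →
        ∃ P' : G.Walk v (legw H k n), P'.IsPath ∧
          ∀ x ∈ P'.support, x ∈ H.verts → x = legw H k n := by
      intro n u hu hn
      refine ⟨(P u hu).copy rfl hn.symm, ?_, ?_⟩
      · rw [Walk.isPath_copy]; exact hP u hu
      · intro x hx hxH
        rw [Walk.support_copy] at hx
        have hxe := hAv u hu x hx hxH
        rw [← hn] at hxe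
        exact hxe
    obtain ⟨P₁', hP₁', hA₁'⟩ := mk i u₁ h₁ hei
    obtain ⟨P₂', hP₂', hA₂'⟩ := mk j u₂ h₂ hej
    have hall2 : ∀ u (hu : u ∈ H.verts), ent u hu = ent u₁ h₁ ∨ ent u hu = ent u₂ h₂ := by
      intro u hu
      by_contra hcon
      push_neg at hcon
      obtain ⟨hc1, hc2⟩ := hcon
      have hSLa := entries_sameLeg H hG hv hc1 (hentS u hu) (hentS u₁ h₁)
        (hP u hu) (hP u₁ h₁) (hAv u hu) (hAv u₁ h₁)
      obtain ⟨k', i', j', hi', hj', he3, he1'⟩ := hSLa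
      have hkk : k' = k := by
        by_contra hkk
        exact disj_leg' H hkk ⟨j', hj', he1'⟩ ⟨i, hi, hei⟩
      rw [hkk] at hi' hj' he3 he1'
      obtain ⟨P₃', hP₃', hA₃'⟩ := mk i' u hu he3
      have hne1 : i' ≠ i := by
        rintro rfl
        exact hc1 (he3.symm.trans hei)
      have hne2 : i' ≠ j := by
        rintro rfl
        exact hc2 (he3.symm.trans hej)
      exact three_entries_any H hG hv k hne1 hne2 hijne hi' hi hj hP₃' hP₁' hP₂' hA₃' hA₁' hA₂'
    have hall : ∀ u ∈ H.verts,
        G.dist v u = G.dist v (legw H k i) + G.dist (legw H k i) u ∨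
        G.dist v u = G.dist v (legw H k j) + G.dist (legw H k j) u := by
      intro u hu
      rcases hall2 u hu with h | h
      · left; have hr := hroute u hu; rw [h, ← hei] at hr; exact hr
      · right; have hr := hroute u hu; rw [h, ← hej] at hr; exact hr
    rcases Nat.lt_or_ge i j with hlt | hge
    · exact gate_of_two H hc k hlt hj hall
    · have hlt : j < i := by omega
      exact gate_of_two H hc k hlt hi (fun u hu => (hall u hu).symm)

end Gate

end CactusHelper

theorem multipacking_of_special_subgraph (G : SimpleGraph V) [Fintype V]
    (hG : IsCactus G) (H : SpecialSubgraph G) (M : Set V) (hM : M ⊆ H.verts)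
    (hmpH : ∀ v ∈ H.verts, ∀ r : ℕ, 1 ≤ r → (M ∩ {u | G.dist v u ≤ r}).ncard ≤ r) :
    ∀ v : V, ∀ r : ℕ, 1 ≤ r → (M ∩ {u | G.dist v u ≤ r}).ncard ≤ r := by
  intro v r hr
  obtain ⟨v', hv', hgate⟩ := CactusHelper.gate H hG v
  refine le_trans (Set.ncard_le_ncard ?_ (Set.toFinite _)) (hmpH v' hv' r hr)
  rintro u ⟨huM, hud⟩
  exact ⟨huM, le_trans (hgate u (hM huM)) hud⟩
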